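/- arXiv:1310.3368 — 3 statements merged into one kernel-verified Lean document; each statement's English description precedes it below -/
import Mathlib

section
/- Let n ≥ 1 be an integer and γ > 1. For every measurable function f : ℝⁿ → ℝ such that f ∈ L¹(ℝⁿ, dx) ∩ L^γ(ℝⁿ, dx) and ∫_{ℝⁿ} |f(x)| |x|² dx < ∞, one has ∫_{ℝⁿ} |f(x)| dx ≤ C₁ · (∫_{ℝⁿ} |f(x)|^γ dx)^{(1/γ)·(2γ/((n+2)γ−n))} · (∫_{ℝⁿ} |f(x)| |x|² dx)^{n(γ−1)/((n+2)γ−n)}, where C₁ = 2 (π^{n/2}/Γ(n/2+1))^{2(γ−1)/((n+2)γ−n)}. -/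
open MeasureTheory

section Aux

variable {n : ℕ}

/-- Hölder + tail splitting: the key inequality for each radius `R > 0`. -/
lemma chemin_key (n : ℕ) (hn : 1 ≤ n) (γ : ℝ) (hγ : 1 < γ)
    (f : EuclideanSpace ℝ (Fin n) → ℝ)
    (hf1 : Integrable f)
    (hfγ : Integrable (fun x => |f x| ^ γ))
    (hfx : Integrable (fun x => |f x| * ‖x‖ ^ 2))
    (R : ℝ) (hR : 0 < R) :
    ∫ x, |f x| ≤
      ((Real.pi ^ ((n : ℝ) / 2) / Real.Gamma ((n : ℝ) / 2 + 1)) ^ ((γ - 1)/γ)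
          * (∫ x, |f x| ^ γ) ^ (1/γ)) * R ^ ((n : ℝ) * (γ - 1) / γ)
        + (∫ x, |f x| * ‖x‖ ^ 2) / R ^ (2:ℝ) := by
  haveI : Nonempty (Fin n) := ⟨⟨0, hn⟩⟩
  have hγ0 : (0:ℝ) < γ := lt_trans one_pos hγ
  have hγ1 : (0:ℝ) < γ - 1 := by linarith
  set ω : ℝ := Real.pi ^ ((n : ℝ) / 2) / Real.Gamma ((n : ℝ) / 2 + 1) with hωdef
  have hω : 0 < ω := by
    apply div_pos (Real.rpow_pos_of_pos Real.pi_pos _)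
    exact Real.Gamma_pos_of_pos (by positivity)
  set B := Metric.ball (0 : EuclideanSpace ℝ (Fin n)) R with hBdef
  have hBmeas : MeasurableSet B := measurableSet_ball
  have hsplit : ∫ x, |f x| = (∫ x in B, |f x|) + ∫ x in Bᶜ, |f x| :=
    (integral_add_compl hBmeas hf1.abs).symm
  have hq0 : ENNReal.ofReal γ ≠ 0 := by simp [hγ0, le_of_lt, not_le]
  have hqt : ENNReal.ofReal γ ≠ ⊤ := ENNReal.ofReal_ne_top
  -- `|f| ∈ L^γ`
  have hmem : MemLp (fun x => |f x|) (ENNReal.ofReal γ) volume := by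
    rw [← memLp_norm_rpow_iff (p := ENNReal.ofReal γ) hf1.abs.aestronglyMeasurable hq0 hqt]
    simp only [Real.norm_eq_abs, abs_abs, ENNReal.toReal_ofReal hγ0.le,
      ENNReal.div_self hq0 hqt, memLp_one_iff_integrable]
    exact hfγ
  haveI : IsFiniteMeasure (volume.restrict B) := by
    constructor
    rw [Measure.restrict_apply_univ]
    exact measure_ball_lt_top
  have hpq : γ.HolderConjugate (γ / (γ - 1)) := Real.HolderConjugate.conjExponent hγ
  have holder := integral_mul_le_Lp_mul_Lq_of_nonneg (μ := volume.restrict B) hpq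
    (f := fun x => |f x|) (g := fun _ => (1:ℝ))
    (Filter.Eventually.of_forall fun x => abs_nonneg _)
    (Filter.Eventually.of_forall fun x => zero_le_one)
    (hmem.restrict B) (memLp_const 1)
  simp only [mul_one, Real.one_rpow, setIntegral_const, smul_eq_mul] at holder
  -- the volume of the ball
  have hvol : (volume B).toReal = R ^ (n:ℕ) * ω := by
    rw [hBdef, EuclideanSpace.volume_ball, Fintype.card_fin, ENNReal.toReal_mul,
      ENNReal.toReal_pow, ENNReal.toReal_ofReal hR.le, ENNReal.toReal_ofReal (by positivity)]
    congr 1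
    rw [hωdef]
    congr 1
    rw [Real.sqrt_eq_rpow, ← Real.rpow_natCast (Real.pi ^ ((1:ℝ)/2)) n,
      ← Real.rpow_mul Real.pi_pos.le]
    congr 1
    ring
  have hIB : ∫ x in B, |f x| ^ γ ≤ ∫ x, |f x| ^ γ :=
    setIntegral_le_integral hfγ (Filter.Eventually.of_forall fun x => Real.rpow_nonneg (abs_nonneg _) _)
  have hinner : ∫ x in B, |f x| ≤
      (ω ^ ((γ - 1)/γ) * (∫ x, |f x| ^ γ) ^ (1/γ)) * R ^ ((n : ℝ) * (γ - 1) / γ) := by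
    have h1q : 1 / (γ / (γ - 1)) = (γ - 1)/γ := one_div_div _ _
    have hvol' : ((volume B).toReal) ^ ((γ-1)/γ) = R ^ ((n : ℝ) * (γ - 1) / γ) * ω ^ ((γ-1)/γ) := by
      rw [hvol, Real.mul_rpow (pow_nonneg hR.le _) hω.le, ← Real.rpow_natCast R n,
        ← Real.rpow_mul hR.le, mul_div_assoc]
    calc ∫ x in B, |f x| ≤ (∫ x in B, |f x| ^ γ) ^ (1/γ) * ((volume B).toReal) ^ (1/(γ/(γ-1))) :=
          holder
      _ ≤ (∫ x, |f x| ^ γ) ^ (1/γ) * ((volume B).toReal) ^ (1/(γ/(γ-1))) := by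
          apply mul_le_mul_of_nonneg_right _ (Real.rpow_nonneg ENNReal.toReal_nonneg _)
          apply Real.rpow_le_rpow _ hIB (by positivity)
          exact setIntegral_nonneg hBmeas fun x _ => Real.rpow_nonneg (abs_nonneg _) _
      _ = _ := by rw [h1q, hvol']; ring
  have htail : ∫ x in Bᶜ, |f x| ≤ (∫ x, |f x| * ‖x‖ ^ 2) / R ^ (2:ℝ) := by
    have hR2 : R ^ (2:ℝ) = R ^ (2:ℕ) := by
      rw [show (2:ℝ) = ((2:ℕ):ℝ) by norm_num, Real.rpow_natCast]
    rw [hR2]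
    have step1 : ∫ x in Bᶜ, |f x| ≤ ∫ x in Bᶜ, |f x| * ‖x‖ ^ 2 / R ^ 2 := by
      apply setIntegral_mono_on hf1.abs.integrableOn ((hfx.div_const _).integrableOn)
        hBmeas.compl
      intro x hx
      have hxR : R ≤ ‖x‖ := by
        have := hx
        simp only [hBdef, Set.mem_compl_iff, Metric.mem_ball, dist_zero_right, not_lt] at this
        exact this
      have h1 : (1:ℝ) ≤ ‖x‖ ^ 2 / R ^ 2 := by
        rw [le_div_iff₀ (by positivity), one_mul]
        exact pow_le_pow_left₀ hR.le hxR 2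
      calc |f x| = |f x| * 1 := (mul_one _).symm
        _ ≤ |f x| * (‖x‖ ^ 2 / R ^ 2) :=
            mul_le_mul_of_nonneg_left h1 (abs_nonneg _)
        _ = |f x| * ‖x‖ ^ 2 / R ^ 2 := by ring
    have step2 : ∫ x in Bᶜ, |f x| * ‖x‖ ^ 2 / R ^ 2 ≤ ∫ x, |f x| * ‖x‖ ^ 2 / R ^ 2 :=
      setIntegral_le_integral (hfx.div_const _)
        (Filter.Eventually.of_forall fun x => by positivity)
    calc ∫ x in Bᶜ, |f x| ≤ ∫ x, |f x| * ‖x‖ ^ 2 / R ^ 2 := le_trans step1 step2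
      _ = (∫ x, |f x| * ‖x‖ ^ 2) / R ^ 2 := integral_div _ _
  rw [hsplit]
  exact add_le_add hinner htail

end Aux

/-- **Lemma 3.4 (Chemin interpolation inequality).**
For `n ≥ 1`, `γ > 1` and `f ∈ L¹ ∩ L^γ` with finite second moment,
`‖f‖_{L¹} ≤ C₁ ‖f‖_{L^γ}^{2γ/((n+2)γ−n)} ‖f‖_{L¹(|x|² dx)}^{n(γ−1)/((n+2)γ−n)}`
where `C₁ = 2 (π^{n/2}/Γ(n/2+1))^{2(γ−1)/((n+2)γ−n)}`. -/
theorem chemin_interpolation_inequality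
    (n : ℕ) (hn : 1 ≤ n) (γ : ℝ) (hγ : 1 < γ)
    (f : EuclideanSpace ℝ (Fin n) → ℝ)
    (hf1 : Integrable f)
    (hfγ : Integrable (fun x => |f x| ^ γ))
    (hfx : Integrable (fun x => |f x| * ‖x‖ ^ 2)) :
    ∫ x, |f x| ≤
      (2 * (Real.pi ^ ((n : ℝ) / 2) / Real.Gamma ((n : ℝ) / 2 + 1)) ^
          (2 * (γ - 1) / (((n : ℝ) + 2) * γ - n)))
        * (∫ x, |f x| ^ γ) ^ ((1 / γ) * (2 * γ / (((n : ℝ) + 2) * γ - n)))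
        * (∫ x, |f x| * ‖x‖ ^ 2) ^ ((n : ℝ) * (γ - 1) / (((n : ℝ) + 2) * γ - n)) := by
  have hγ0 : (0:ℝ) < γ := lt_trans one_pos hγ
  have hn1 : (1:ℝ) ≤ (n:ℝ) := by exact_mod_cast hn
  set ω : ℝ := Real.pi ^ ((n : ℝ) / 2) / Real.Gamma ((n : ℝ) / 2 + 1) with hωdef
  have hω : 0 < ω := by
    apply div_pos (Real.rpow_pos_of_pos Real.pi_pos _)
    exact Real.Gamma_pos_of_pos (by positivity)
  set Iγ : ℝ := ∫ x, |f x| ^ γ with hIdef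
  set M : ℝ := ∫ x, |f x| * ‖x‖ ^ 2 with hMdef
  have hI0 : 0 ≤ Iγ := integral_nonneg fun x => Real.rpow_nonneg (abs_nonneg _) _
  have hM0 : 0 ≤ M := integral_nonneg fun x => mul_nonneg (abs_nonneg _) (by positivity)
  have hRHS0 : 0 ≤ (2 * ω ^ (2 * (γ - 1) / (((n : ℝ) + 2) * γ - n)))
        * Iγ ^ ((1 / γ) * (2 * γ / (((n : ℝ) + 2) * γ - n)))
        * M ^ ((n : ℝ) * (γ - 1) / (((n : ℝ) + 2) * γ - n)) := by
    have := Real.rpow_nonneg hω.le (2 * (γ - 1) / (((n : ℝ) + 2) * γ - n))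
    have := Real.rpow_nonneg hI0 ((1 / γ) * (2 * γ / (((n : ℝ) + 2) * γ - n)))
    have := Real.rpow_nonneg hM0 ((n : ℝ) * (γ - 1) / (((n : ℝ) + 2) * γ - n))
    positivity
  -- degenerate cases: if `f = 0` a.e. we are done
  have hzero : (f =ᵐ[volume] 0) → ∫ x, |f x| ≤ _ := fun hf => by
    have : ∫ x, |f x| = 0 := by
      rw [integral_eq_zero_iff_of_nonneg (fun x => abs_nonneg _) hf1.abs]
      · filter_upwards [hf] with x hx; simp [hx]
    exact this ▸ hRHS0
  rcases eq_or_lt_of_le hI0 with hI | hI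
  · -- `Iγ = 0` forces `f = 0` a.e.
    apply hzero
    have h0 : (fun x => |f x| ^ γ) =ᵐ[volume] 0 := by
      rw [← integral_eq_zero_iff_of_nonneg (fun x => Real.rpow_nonneg (abs_nonneg _) _) hfγ]
      exact hI.symm
    filter_upwards [h0] with x hx
    have : |f x| ^ γ = 0 := hx
    have := (Real.rpow_eq_zero (abs_nonneg _) (ne_of_gt hγ0)).mp this
    simpa [abs_eq_zero] using this
  rcases eq_or_lt_of_le hM0 with hM | hM
  · -- `M = 0` forces `f = 0` a.e.
    apply hzero
    have h0 : (fun x => |f x| * ‖x‖ ^ 2) =ᵐ[volume] 0 := by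
      rw [← integral_eq_zero_iff_of_nonneg
        (fun x => mul_nonneg (abs_nonneg _) (by positivity)) hfx]
      exact hM.symm
    have hne : ∀ᵐ x : EuclideanSpace ℝ (Fin n), x ≠ 0 := by
      haveI : Nonempty (Fin n) := ⟨⟨0, hn⟩⟩
      have : volume ({0} : Set (EuclideanSpace ℝ (Fin n))) = 0 := measure_singleton 0
      rw [ae_iff]
      simpa [Set.setOf_eq_eq_singleton'] using this
    filter_upwards [h0, hne] with x hx hxne
    have hx' : |f x| * ‖x‖ ^ 2 = 0 := hx
    rcases mul_eq_zero.mp hx' with h | h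
    · simpa [abs_eq_zero] using h
    · exact absurd (norm_eq_zero.mp (by simpa using pow_eq_zero_iff (n := 2) (by norm_num) |>.mp h)) hxne
  -- main case
  set θ : ℝ := (n : ℝ) * (γ - 1) / γ with hθdef
  set A : ℝ := ω ^ ((γ - 1)/γ) * Iγ ^ (1/γ) with hAdef
  have hA : 0 < A := mul_pos (Real.rpow_pos_of_pos hω _) (Real.rpow_pos_of_pos hI _)
  have hθ0 : 0 < θ := by
    apply div_pos _ hγ0
    exact mul_pos (by linarith) (by linarith)
  set s : ℝ := θ + 2 with hsdef
  have hs0 : 0 < s := by linarith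
  set D : ℝ := ((n : ℝ) + 2) * γ - n with hDdef
  have hD0 : 0 < D := by nlinarith
  have hsD : s = D / γ := by
    field_simp [hsdef, hθdef, hDdef]
    rw [hsdef, hθdef, hDdef, add_mul, div_mul_cancel₀ _ hγ0.ne']; ring
  set R : ℝ := (M / A) ^ (1/s) with hRdef
  have hMA : 0 < M / A := div_pos hM hA
  have hR : 0 < R := Real.rpow_pos_of_pos hMA _
  have key := chemin_key n hn γ hγ f hf1 hfγ hfx R hR
  rw [← hωdef, ← hIdef, ← hMdef, ← hθdef, ← hAdef] at key
  have hRθ : R ^ θ = (M/A) ^ (θ/s) := by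
    rw [hRdef, ← Real.rpow_mul hMA.le]; congr 1; ring
  have hR2 : R ^ (2:ℝ) = (M/A) ^ (2/s) := by
    rw [hRdef, ← Real.rpow_mul hMA.le]; congr 1; ring
  have h1 : A * R ^ θ = A ^ (2/s) * M ^ (θ/s) := by
    rw [hRθ, Real.div_rpow hM0 hA.le]
    have hA2 : A ^ (2/s) = A / A ^ (θ/s) := by
      rw [eq_div_iff (ne_of_gt (Real.rpow_pos_of_pos hA _)), ← Real.rpow_add hA,
        show 2/s + θ/s = 1 by rw [← add_div, show (2:ℝ)+θ = s by rw [hsdef]; ring, div_self hs0.ne'], Real.rpow_one]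
    rw [hA2]; ring
  have h2 : M / R ^ (2:ℝ) = A ^ (2/s) * M ^ (θ/s) := by
    rw [hR2, Real.div_rpow hM0 hA.le]
    have hM2 : M ^ (θ/s) = M / M ^ (2/s) := by
      rw [eq_div_iff (ne_of_gt (Real.rpow_pos_of_pos hM _)), ← Real.rpow_add hM,
        show θ/s + 2/s = 1 by rw [← add_div, show θ+(2:ℝ) = s by rw [hsdef], div_self hs0.ne'], Real.rpow_one]
    rw [hM2]
    have h2s : M ^ (2/s) ≠ 0 := ne_of_gt (Real.rpow_pos_of_pos hM _)
    field_simp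
  have hfinal : A * R ^ θ + M / R ^ (2:ℝ)
      = (2 * ω ^ (2 * (γ - 1) / D)) * Iγ ^ ((1 / γ) * (2 * γ / D)) * M ^ ((n : ℝ) * (γ - 1) / D) := by
    rw [h1, h2]
    have e3 : θ/s = (n : ℝ) * (γ - 1) / D := by
      rw [hsD, hθdef]; field_simp
    have hA2 : A ^ (2/s) = ω ^ (2 * (γ - 1) / D) * Iγ ^ ((1 / γ) * (2 * γ / D)) := by
      rw [hAdef, Real.mul_rpow (Real.rpow_nonneg hω.le _) (Real.rpow_nonneg hI0 _),
        ← Real.rpow_mul hω.le, ← Real.rpow_mul hI0]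
      congr 1
      · congr 1
        rw [hsD]; field_simp; try ring
      · congr 1
        rw [hsD]; field_simp; try ring
    rw [hA2, e3]; ring
  calc ∫ x, |f x| ≤ A * R ^ θ + M / R ^ (2:ℝ) := key
    _ = _ := hfinal
end

section
/- Let c ≥ 0, B ≥ 0 and p > 1, and let y : [0,∞) → ℝ be differentiable with y′(t) ≤ (c/(t+1) + B (t+1)^{−p}) y(t) and y(t) ≥ 0 for all t ≥ 0. Then y(t) ≤ y(0) exp(B/(p−1)) (t+1)^c exp(−B/((p−1)(t+1)^{p−1})) for all t ≥ 0. -/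
/-- **Gronwall-type inequality (core of estimate (65) in Proposition 4.4):**
if `y ≥ 0` is differentiable on `[0,∞)` with
`y′(t) ≤ (c/(t+1) + B (t+1)^{−p}) y(t)`, `c, B ≥ 0`, `p > 1`, then
`y(t) ≤ y(0) exp(B/(p−1)) (t+1)^c exp(−B/((p−1)(t+1)^{p−1}))` for all `t ≥ 0`. -/
theorem gronwall_power_exp_decay_general
    (c B p : ℝ) (hc : 0 ≤ c) (hB : 0 ≤ B) (hp : 1 < p) (y y' : ℝ → ℝ)
    (hderiv : ∀ t, 0 ≤ t → HasDerivAt y (y' t) t)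
    (hineq : ∀ t, 0 ≤ t → y' t ≤ (c / (t + 1) + B * (t + 1) ^ (-p)) * y t)
    (hnonneg : ∀ t, 0 ≤ t → 0 ≤ y t) :
    ∀ t, 0 ≤ t →
      y t ≤ y 0 * Real.exp (B / (p - 1)) * (t + 1) ^ c
              * Real.exp (-B / ((p - 1) * (t + 1) ^ (p - 1))) := by
  set φ : ℝ → ℝ := fun t => c * Real.log (t + 1) - B / (p - 1) * (t + 1) ^ (1 - p) with hφ
  set F : ℝ → ℝ := fun t => y t * Real.exp (-φ t) with hF
  have hp1 : p - 1 > 0 := by linarith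
  have hφd : ∀ t : ℝ, 0 ≤ t →
      HasDerivAt φ (c / (t + 1) + B * (t + 1) ^ (-p)) t := by
    intro t ht
    have ht1 : (0:ℝ) < t + 1 := by linarith
    have h1 : HasDerivAt (fun s : ℝ => s + 1) 1 t := (hasDerivAt_id t).add_const 1
    have hlog : HasDerivAt (fun s : ℝ => Real.log (s + 1)) (1 / (t + 1)) t := by
      exact ((Real.hasDerivAt_log ht1.ne').comp t h1).congr_deriv (by simp : (t + 1)⁻¹ * 1 = 1 / (t + 1))
    have hr : HasDerivAt (fun s : ℝ => (s + 1) ^ (1 - p))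
        ((1 - p) * (t + 1) ^ (-p)) t := by
      have := (Real.hasDerivAt_rpow_const (p := 1 - p) (Or.inl ht1.ne')).comp t h1
      exact this.congr_deriv (by rw [show (1:ℝ) - p - 1 = -p by ring]; ring)
    have : HasDerivAt φ (c * (1 / (t + 1)) - B / (p - 1) * ((1 - p) * (t + 1) ^ (-p))) t :=
      (hlog.const_mul c).sub (hr.const_mul (B / (p - 1)))
    convert this using 1
    field_simp
    ring
  have hFd : ∀ t : ℝ, 0 ≤ t →
      HasDerivAt F ((y' t - (c / (t + 1) + B * (t + 1) ^ (-p)) * y t) * Real.exp (-φ t)) t := by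
    intro t ht
    have := (hderiv t ht).mul (((hφd t ht).neg).exp)
    exact this.congr_deriv (by simp only [Pi.neg_apply]; ring)
  have hanti : AntitoneOn F (Set.Ici 0) := by
    refine antitoneOn_of_deriv_nonpos (convex_Ici 0) ?_ ?_ ?_
    · intro t ht
      exact ((hFd t ht).continuousAt).continuousWithinAt
    · intro t ht
      rw [interior_Ici] at ht
      exact ((hFd t ht.le).differentiableAt).differentiableWithinAt
    · intro t ht
      rw [interior_Ici] at ht
      have ht' : (0:ℝ) ≤ t := le_of_lt ht
      rw [(hFd t ht').deriv]
      have h1 : y' t - (c / (t + 1) + B * (t + 1) ^ (-p)) * y t ≤ 0 :=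
        sub_nonpos.mpr (hineq t ht')
      exact mul_nonpos_of_nonpos_of_nonneg h1 (Real.exp_nonneg _)
  intro t ht
  have hFle : F t ≤ F 0 := hanti (Set.self_mem_Ici) ht ht
  have ht1 : (0:ℝ) < t + 1 := by linarith
  have hφ0 : φ 0 = -(B / (p - 1)) := by
    simp [hφ, Real.one_rpow]
  have key : y t ≤ y 0 * Real.exp (φ t - φ 0) := by
    have hmul := mul_le_mul_of_nonneg_right hFle (Real.exp_nonneg (φ t))
    calc y t = y t * Real.exp (-φ t) * Real.exp (φ t) := by
          rw [mul_assoc, ← Real.exp_add]; simp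
      _ ≤ y 0 * Real.exp (-φ 0) * Real.exp (φ t) := hmul
      _ = y 0 * Real.exp (φ t - φ 0) := by
          rw [mul_assoc, ← Real.exp_add]
          congr 1
          ring
  refine key.trans_eq ?_
  rw [hφ0]
  have hrpow : (t + 1) ^ c = Real.exp (c * Real.log (t + 1)) := by
    rw [Real.rpow_def_of_pos ht1, mul_comm]
  have hinv : (t + 1) ^ (1 - p) = ((t + 1) ^ (p - 1))⁻¹ := by
    rw [show (1 - p) = -(p - 1) by ring, Real.rpow_neg ht1.le]
  have : φ t - -(B / (p - 1)) =
      B / (p - 1) + c * Real.log (t + 1) + (-B / ((p - 1) * (t + 1) ^ (p - 1))) := by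
    simp only [hφ, hinv]
    have hne : ((t + 1) ^ (p - 1)) ≠ 0 := (Real.rpow_pos_of_pos ht1 _).ne'
    field_simp
    ring
  rw [this, Real.exp_add, Real.exp_add, hrpow]
  ring
end

section
/- Let n ≥ 1 and let v : ℝⁿ → ℝⁿ be a continuously differentiable vector field such that div v is Lebesgue integrable on ℝⁿ and |x|^{n−1} |v(x)| → 0 as |x| → ∞. Then ∫_{ℝⁿ} div v(x) dx = 0. -/
open MeasureTheory Filter

open Set in
private lemma key (m : ℕ) (w : (Fin (m+1) → ℝ) → (Fin (m+1) → ℝ))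
    (hw : ContDiff ℝ 1 w)
    (hint : Integrable (fun x => ∑ i, fderiv ℝ w x (Pi.single i 1) i))
    (hdecay : Tendsto (fun x : Fin (m+1) → ℝ => ‖x‖ ^ m * ‖w x‖)
      (Bornology.cobounded _) (nhds 0)) :
    ∫ x, ∑ i, fderiv ℝ w x (Pi.single i 1) i = 0 := by
  set D : (Fin (m+1) → ℝ) → ℝ := fun x => ∑ i, fderiv ℝ w x (Pi.single i 1) i with hD
  set s : ℕ → Set (Fin (m+1) → ℝ) :=
    fun k => Icc (fun _ => -((k:ℝ)+1)) (fun _ => (k:ℝ)+1) with hs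
  have hsm : ∀ k, MeasurableSet (s k) := fun k => measurableSet_Icc
  have hmono : Monotone s := by
    intro a b hab
    have : (a:ℝ) ≤ b := by exact_mod_cast hab
    exact Icc_subset_Icc (fun i => by simp only; linarith) (fun i => by simp only; linarith)
  have hunion : (⋃ k, s k) = univ := by
    ext x
    simp only [mem_iUnion, mem_univ, iff_true]
    obtain ⟨k, hk⟩ := exists_nat_ge ‖x‖
    refine ⟨k, fun i => ?_, fun i => ?_⟩ <;>
    · have h := (norm_le_pi_norm x i).trans hk
      rw [Real.norm_eq_abs, abs_le] at h
      simp only; linarith [h.1, h.2]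
  have hA : Tendsto (fun k => ∫ x in s k, D x) atTop (nhds (∫ x, D x)) := by
    have h := tendsto_setIntegral_of_monotone hsm hmono
      (by rw [hunion]; exact hint.integrableOn)
    rwa [hunion, setIntegral_univ] at h
  -- the divergence theorem identity on each box
  have hid : ∀ k : ℕ, ∫ x in s k, D x =
      ∑ i : Fin (m+1),
        ((∫ x in Icc ((fun _ => -((k:ℝ)+1)) ∘ i.succAbove) ((fun _ => (k:ℝ)+1) ∘ i.succAbove),
            w (i.insertNth ((k:ℝ)+1) x) i) -
          ∫ x in Icc ((fun _ => -((k:ℝ)+1)) ∘ i.succAbove) ((fun _ => (k:ℝ)+1) ∘ i.succAbove),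
            w (i.insertNth (-((k:ℝ)+1)) x) i) := by
    intro k
    exact MeasureTheory.integral_divergence_of_hasFDerivAt_off_countable
      (fun _ => -((k:ℝ)+1)) (fun _ => (k:ℝ)+1)
      (fun i => show -((k:ℝ)+1) ≤ (k:ℝ)+1 by have : (0:ℝ) ≤ k := Nat.cast_nonneg k; linarith)
      w (fderiv ℝ w) ∅ countable_empty hw.continuous.continuousOn
      (fun x _ => (hw.differentiable one_ne_zero x).hasFDerivAt)
      hint.integrableOn
  have hB : Tendsto (fun k => ∫ x in s k, D x) atTop (nhds 0) := by
    rw [NormedAddCommGroup.tendsto_nhds_zero]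
    intro ε hε
    set C : ℝ := ((m:ℝ)+1) * 2 * 2^m + 1 with hCdef
    have hC : 0 < C := by positivity
    set ε' := ε / C with hε'def
    have hε' : 0 < ε' := div_pos hε hC
    obtain ⟨R₀, -, hR₀⟩ := (Filter.hasBasis_cobounded_norm.eventually_iff).mp
      ((NormedAddCommGroup.tendsto_nhds_zero.mp hdecay) ε' hε')
    obtain ⟨N, hN⟩ := exists_nat_ge R₀
    filter_upwards [eventually_ge_atTop N] with k hk
    set R : ℝ := (k:ℝ)+1 with hRdef
    have hR1 : (1:ℝ) ≤ R := by have : (0:ℝ) ≤ k := Nat.cast_nonneg k; simp only [hRdef]; linarith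
    have hR0 : (0:ℝ) < R := lt_of_lt_of_le one_pos hR1
    have hRR0 : R₀ ≤ R := by
      have : (N:ℝ) ≤ k := Nat.cast_le.mpr hk
      simp only [hRdef]; linarith
    -- bound on each face integral
    have hface : ∀ c : ℝ, |c| = R → ∀ i : Fin (m+1),
        ‖∫ x in Icc ((fun _ => -R) ∘ i.succAbove) ((fun _ => R) ∘ i.succAbove),
            w (Fin.insertNth (α := fun _ => ℝ) i c x) i‖ ≤ ε' * 2^m := by
      intro c hc i
      have hbound : ∀ x ∈ Icc ((fun _ => -R) ∘ i.succAbove) ((fun _ => R) ∘ i.succAbove),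
          ‖w (Fin.insertNth (α := fun _ => ℝ) i c x) i‖ ≤ ε' / R^m := by
        intro x _
        set y := Fin.insertNth (α := fun _ => ℝ) i c x with hy
        have hyR : R ≤ ‖y‖ := by
          have h1 : ‖y i‖ ≤ ‖y‖ := norm_le_pi_norm y i
          rw [hy, Fin.insertNth_apply_same, Real.norm_eq_abs, hc] at h1
          exact h1
        have hy0 : 0 < ‖y‖ := lt_of_lt_of_le hR0 hyR
        have hyε : ‖y‖^m * ‖w y‖ < ε' := by
          have := hR₀ (le_trans hRR0 hyR : R₀ ≤ ‖y‖)
          rwa [Real.norm_eq_abs, abs_of_nonneg (by positivity)] at this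
        have h2 : ‖w y‖ ≤ ε' / ‖y‖^m := by
          rw [le_div_iff₀ (by positivity)]
          calc ‖w y‖ * ‖y‖^m = ‖y‖^m * ‖w y‖ := mul_comm _ _
            _ ≤ ε' := hyε.le
        calc ‖w y i‖ ≤ ‖w y‖ := norm_le_pi_norm (w y) i
          _ ≤ ε' / ‖y‖^m := h2
          _ ≤ ε' / R^m := by
              apply div_le_div_of_nonneg_left hε'.le (by positivity)
              exact pow_le_pow_left₀ hR0.le hyR m
      have hmeas : AEStronglyMeasurable
          (fun x : Fin m → ℝ => w (Fin.insertNth (α := fun _ => ℝ) i c x) i) volume :=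
        ((continuous_apply i).comp (hw.continuous.comp
          (continuous_const.finInsertNth i continuous_id))).aestronglyMeasurable
      have hvol : (volume (Icc ((fun _ => -R) ∘ i.succAbove)
          ((fun _ => R) ∘ i.succAbove))).toReal = (2*R)^m := by
        rw [Real.volume_Icc_pi_toReal (fun j => by
          simp only [Function.comp_apply]; linarith)]
        simp only [Function.comp_apply]
        rw [Finset.prod_const]
        congr 1
        · ring_nf
        · simp
      calc ‖∫ x in Icc ((fun _ => -R) ∘ i.succAbove) ((fun _ => R) ∘ i.succAbove),
            w (Fin.insertNth (α := fun _ => ℝ) i c x) i‖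
          ≤ (ε' / R^m) * (volume (Icc ((fun _ => -R) ∘ i.succAbove)
            ((fun _ => R) ∘ i.succAbove))).toReal :=
            norm_setIntegral_le_of_norm_le_const
              isCompact_Icc.measure_lt_top hbound
        _ = (ε' / R^m) * (2*R)^m := by rw [hvol]
        _ = ε' * 2^m := by
            rw [mul_pow]
            field_simp
    rw [hid k]
    calc ‖∑ i : Fin (m+1), ((∫ x in Icc ((fun _ => -R) ∘ i.succAbove)
            ((fun _ => R) ∘ i.succAbove), w (Fin.insertNth (α := fun _ => ℝ) i R x) i) -
          ∫ x in Icc ((fun _ => -R) ∘ i.succAbove) ((fun _ => R) ∘ i.succAbove),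
            w (Fin.insertNth (α := fun _ => ℝ) i (-R) x) i)‖
        ≤ ∑ i : Fin (m+1), ‖(∫ x in Icc ((fun _ => -R) ∘ i.succAbove)
            ((fun _ => R) ∘ i.succAbove), w (Fin.insertNth (α := fun _ => ℝ) i R x) i) -
          ∫ x in Icc ((fun _ => -R) ∘ i.succAbove) ((fun _ => R) ∘ i.succAbove),
            w (Fin.insertNth (α := fun _ => ℝ) i (-R) x) i‖ := norm_sum_le _ _
      _ ≤ ∑ i : Fin (m+1), (ε' * 2^m + ε' * 2^m) := by
          apply Finset.sum_le_sum
          intro i _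
          exact (norm_sub_le _ _).trans (add_le_add
            (hface R (abs_of_pos hR0) i)
            (hface (-R) (by rw [abs_neg]; exact abs_of_pos hR0) i))
      _ = ((m:ℝ)+1) * 2 * 2^m * ε' := by
          rw [Finset.sum_const]
          simp [Finset.card_univ]
          ring
      _ < C * ε' := by
          apply mul_lt_mul_of_pos_right _ hε'
          rw [hCdef]; linarith
      _ = ε := by rw [hε'def, mul_div_cancel₀ _ hC.ne']
  exact tendsto_nhds_unique hA hB


private lemma coord_le_norm {m : ℕ} (z : EuclideanSpace ℝ (Fin m)) (i : Fin m) : |z i| ≤ ‖z‖ := by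
  rw [EuclideanSpace.norm_eq, ← Real.sqrt_sq_eq_abs]
  apply Real.sqrt_le_sqrt
  have := Finset.single_le_sum (f := fun j => ‖z j‖^2) (fun j _ => sq_nonneg _)
    (Finset.mem_univ i)
  simpa [Real.norm_eq_abs, sq_abs] using this


/-- **Vanishing of the flux:** if `v` is a `C¹` vector field on `ℝⁿ` whose divergence
is integrable and which satisfies `|x|^{n−1}|v(x)| → 0` as `|x| → ∞`, then the
integral of its divergence vanishes: `∫ div v dx = 0`. -/
theorem integral_divergence_eq_zero
    (n : ℕ) (hn : 1 ≤ n)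
    (v : EuclideanSpace ℝ (Fin n) → EuclideanSpace ℝ (Fin n))
    (hv : ContDiff ℝ 1 v)
    (hint : Integrable (fun x => ∑ i : Fin n, fderiv ℝ v x (EuclideanSpace.single i 1) i))
    (hdecay : Tendsto (fun x : EuclideanSpace ℝ (Fin n) => ‖x‖ ^ (n - 1) * ‖v x‖)
      (Bornology.cobounded _) (nhds 0)) :
    ∫ x, ∑ i : Fin n, fderiv ℝ v x (EuclideanSpace.single i 1) i = 0 := by
  obtain ⟨m, rfl⟩ : ∃ m, n = m + 1 := ⟨n - 1, (Nat.succ_pred_eq_of_pos hn).symm⟩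
  simp only [Nat.add_sub_cancel] at hdecay
  set e : EuclideanSpace ℝ (Fin (m+1)) ≃L[ℝ] (Fin (m+1) → ℝ) :=
    EuclideanSpace.equiv (Fin (m+1)) ℝ with he
  set w : (Fin (m+1) → ℝ) → (Fin (m+1) → ℝ) := fun y => e (v (e.symm y)) with hwdef
  have hw : ContDiff ℝ 1 w := (e.contDiff.comp hv).comp e.symm.contDiff
  have hder : ∀ y : Fin (m+1) → ℝ, ∀ i : Fin (m+1),
      fderiv ℝ w y (Pi.single i 1) i
        = fderiv ℝ v (e.symm y) (EuclideanSpace.single i 1) i := by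
    intro y i
    have h0 : HasFDerivAt v (fderiv ℝ v (e.symm y)) (e.symm y) :=
      (hv.differentiable one_ne_zero (e.symm y)).hasFDerivAt
    have h1 : HasFDerivAt (fun z => v (e.symm z))
        ((fderiv ℝ v (e.symm y)).comp (e.symm : (Fin (m+1) → ℝ) →L[ℝ] _)) y :=
      h0.comp y e.symm.hasFDerivAt
    have h2 : HasFDerivAt w
        (((e : _ →L[ℝ] (Fin (m+1) → ℝ)).comp (fderiv ℝ v (e.symm y))).comp
          (e.symm : (Fin (m+1) → ℝ) →L[ℝ] _)) y := by
      have := (e.hasFDerivAt (x := v (e.symm y))).comp y h1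
      rw [← ContinuousLinearMap.comp_assoc] at this
      exact this
    rw [h2.fderiv]
    rfl
  -- decay transfer
  have hdecayw : Tendsto (fun y : Fin (m+1) → ℝ => ‖y‖ ^ m * ‖w y‖)
      (Bornology.cobounded _) (nhds 0) := by
    have h1 : Tendsto (⇑e.symm) (Bornology.cobounded (Fin (m+1) → ℝ))
        (Bornology.cobounded (EuclideanSpace ℝ (Fin (m+1)))) :=
      e.symm.antilipschitz.tendsto_cobounded
    have h2 := hdecay.comp h1
    apply squeeze_zero (fun y => by positivity) _ h2
    intro y
    have hy : ‖y‖ ≤ ‖e.symm y‖ := by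
      apply (pi_norm_le_iff_of_nonneg (norm_nonneg _)).mpr
      intro i
      exact (coord_le_norm (e.symm y) i : _)
    have hwv : ‖w y‖ ≤ ‖v (e.symm y)‖ := by
      apply (pi_norm_le_iff_of_nonneg (norm_nonneg _)).mpr
      intro i
      exact (coord_le_norm (v (e.symm y)) i : _)
    exact mul_le_mul (pow_le_pow_left₀ (norm_nonneg y) hy m) hwv (norm_nonneg _)
      (by positivity)
  -- measure transfer
  set F := (MeasurableEquiv.toLp 2 (Fin (m+1) → ℝ)).symm with hF
  have hFvol : MeasurePreserving F volume volume :=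
    EuclideanSpace.volume_preserving_symm_measurableEquiv_toLp (Fin (m+1))
  have hcomp : (fun y => ∑ i : Fin (m+1), fderiv ℝ w y (Pi.single i 1) i) ∘ ⇑F
      = fun x => ∑ i : Fin (m+1), fderiv ℝ v x (EuclideanSpace.single i 1) i := by
    funext x
    exact Finset.sum_congr rfl fun i _ => hder (F x) i
  have hintw : Integrable (fun y => ∑ i : Fin (m+1), fderiv ℝ w y (Pi.single i 1) i) :=
    (hFvol.integrable_comp_emb F.measurableEmbedding).mp (by rw [hcomp]; exact hint)
  have h0 := key m w hw hintw hdecayw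
  calc ∫ x, ∑ i : Fin (m+1), fderiv ℝ v x (EuclideanSpace.single i 1) i
      = ∫ x, ((fun y => ∑ i : Fin (m+1), fderiv ℝ w y (Pi.single i 1) i) ∘ ⇑F) x := by
        rw [hcomp]
    _ = ∫ y, ∑ i : Fin (m+1), fderiv ℝ w y (Pi.single i 1) i :=
        hFvol.integral_comp F.measurableEmbedding
          (fun y => ∑ i : Fin (m+1), fderiv ℝ w y (Pi.single i 1) i)
    _ = 0 := h0
end
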